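/- For every integer k ≥ 1, V_k(z) = ₂F₁(−k, k+1; 1/2; −z²/4) + k·z·₂F₁(1−k, k+1; 3/2; −z²/4), where the hypergeometric series terminate (they are polynomials since −k and 1−k are nonpositive integers). -/

import Mathlib

open Finset

/-- `Vpos k z` is the polynomial `V_k(z) = Σ_{j=0}^{2k} C(k+⌊j/2⌋, j) z^j`. -/
noncomputable def Vpos (k : ℕ) (z : ℂ) : ℂ :=
  ∑ j ∈ Finset.range (2 * k + 1), (Nat.choose (k + j / 2) j : ℂ) * z ^ j

/-- `Vneg k z` is the polynomial `V_{-k}(z) = 1 + Σ_{j=1}^{2k-1} C(k+⌊(j-1)/2⌋, j) z^j`. -/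
noncomputable def Vneg (k : ℕ) (z : ℂ) : ℂ :=
  1 + ∑ j ∈ Finset.Icc 1 (2 * k - 1), (Nat.choose (k + (j - 1) / 2) j : ℂ) * z ^ j

/-- The Gauss hypergeometric series `₂F₁(a,b;c;w) = Σ_{n≥0} (a)ₙ(b)ₙ/((c)ₙ n!) wⁿ`,
defined via `tsum` (when `a` is a nonpositive integer the series terminates). -/
noncomputable def hyp2F1 (a b c w : ℂ) : ℂ :=
  ∑' n : ℕ, ((ascPochhammer ℂ n).eval a * (ascPochhammer ℂ n).eval b) /
    ((ascPochhammer ℂ n).eval c * (n.factorial : ℂ)) * w ^ n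

lemma four_pow_ne (n : ℕ) : (4:ℂ)^n ≠ 0 := pow_ne_zero _ (by norm_num)

lemma fac_ne (n : ℕ) : ((n.factorial : ℕ) : ℂ) ≠ 0 := Nat.cast_ne_zero.mpr n.factorial_ne_zero

lemma aP_half_mul : ∀ n : ℕ, (ascPochhammer ℂ n).eval (1/2) * (4^n * n.factorial) =
    ((2*n).factorial : ℂ)
  | 0 => by simp
  | n+1 => by
    have ih := aP_half_mul n
    rw [ascPochhammer_succ_eval]
    have h1 : ((2*(n+1)).factorial : ℂ) = (2*(n:ℂ)+2)*(2*n+1)*((2*n).factorial) := by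
      rw [show 2*(n+1) = (2*n+1)+1 by ring, Nat.factorial_succ, Nat.factorial_succ]
      push_cast; ring
    rw [h1, Nat.factorial_succ]
    push_cast
    linear_combination ((1/2:ℂ)+n)*4*((n:ℂ)+1) * ih

lemma aP_3half_mul : ∀ n : ℕ, (ascPochhammer ℂ n).eval (3/2) * (4^n * n.factorial) =
    ((2*n+1).factorial : ℂ)
  | 0 => by simp
  | n+1 => by
    have ih := aP_3half_mul n
    rw [ascPochhammer_succ_eval]
    have h1 : ((2*(n+1)+1).factorial : ℂ) = (2*(n:ℂ)+3)*(2*n+2)*((2*n+1).factorial) := by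
      rw [show 2*(n+1)+1 = (2*n+2)+1 by ring, Nat.factorial_succ,
        show 2*n+2 = (2*n+1)+1 by ring, Nat.factorial_succ]
      push_cast; ring
    rw [h1, Nat.factorial_succ]
    push_cast
    linear_combination ((3/2:ℂ)+n)*4*((n:ℂ)+1) * ih

lemma aP_half (n : ℕ) :
    (ascPochhammer ℂ n).eval (1/2) = ((2*n).factorial : ℂ) / (4^n * n.factorial) := by
  rw [eq_div_iff (mul_ne_zero (four_pow_ne n) (fac_ne n))]
  exact aP_half_mul n

lemma aP_3half (n : ℕ) :
    (ascPochhammer ℂ n).eval (3/2) = ((2*n+1).factorial : ℂ) / (4^n * n.factorial) := by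
  rw [eq_div_iff (mul_ne_zero (four_pow_ne n) (fac_ne n))]
  exact aP_3half_mul n

lemma aP_nat_succ (m n : ℕ) :
    (ascPochhammer ℂ n).eval ((m:ℂ)+1) = ((m+n).factorial : ℂ) / m.factorial := by
  rw [eq_div_iff (fac_ne m)]
  rw [mul_comm]
  exact_mod_cast factorial_mul_ascPochhammer ℂ m n

lemma aP_neg_mul (m : ℕ) : ∀ n : ℕ, n ≤ m →
    (ascPochhammer ℂ n).eval (-(m:ℂ)) * ((m-n).factorial : ℂ) = (-1)^n * m.factorial
  | 0, _ => by simp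
  | n+1, h => by
    have hn : n ≤ m := Nat.le_of_succ_le h
    have ih := aP_neg_mul m n hn
    rw [ascPochhammer_succ_eval]
    have h2 : ((m-n).factorial : ℂ) = ((m-n : ℕ):ℂ) * ((m-(n+1)).factorial : ℂ) := by
      rw [show m-n = (m-(n+1))+1 by omega, Nat.factorial_succ]
      push_cast
      rw [show ((m - (n+1) : ℕ) : ℂ) + 1 = ((m-n : ℕ) : ℂ) by
        push_cast [Nat.cast_sub h, Nat.cast_sub hn]; ring]
    rw [h2] at ih
    have hcast : (-(m:ℂ) + n) = -(((m-n : ℕ)) : ℂ) := by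
      push_cast [Nat.cast_sub hn]; ring
    rw [hcast]
    linear_combination (-1:ℂ) * ih

lemma aP_neg (m n : ℕ) (h : n ≤ m) :
    (ascPochhammer ℂ n).eval (-(m:ℂ)) = (-1)^n * (m.factorial : ℂ) / ((m-n).factorial : ℂ) := by
  rw [eq_div_iff (fac_ne _)]
  exact aP_neg_mul m n h

lemma aP_neg_zero (m : ℕ) : ∀ n : ℕ, m < n →
    (ascPochhammer ℂ n).eval (-(m:ℂ)) = 0 := by
  intro n hn
  induction n with
  | zero => omega
  | succ n ih =>
    rcases Nat.lt_or_ge m n with h | h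
    · rw [ascPochhammer_succ_eval, ih h, zero_mul]
    · have hmn : m = n := by omega
      subst hmn
      rw [ascPochhammer_succ_eval]
      simp

lemma key1 (n : ℕ) (z kf rf f2 nf tf cc : ℂ)
    (hkf : kf ≠ 0) (hrf : rf ≠ 0) (hf2 : f2 ≠ 0) (hnf : nf ≠ 0)
    (hc : cc * f2 * rf = tf) :
    (-1)^n * kf / rf * (tf / kf) / (f2 / (4^n * nf) * nf) * ((-1)^n * z^(2*n) / 4^n)
      = cc * z^(2*n) := by
  rw [← hc]
  have h4 : (4:ℂ)^n ≠ 0 := pow_ne_zero _ (by norm_num)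
  have hm1 : ((-1:ℂ))^n * (-1)^n = 1 := by rw [← pow_add, ← two_mul, pow_mul]; norm_num
  field_simp
  linear_combination cc*z^(2*n) * hm1

lemma key2 (n : ℕ) (z kf rf f2 nf tf cc kc : ℂ)
    (hkf : kf ≠ 0) (hrf : rf ≠ 0) (hf2 : f2 ≠ 0) (hnf : nf ≠ 0) (hkc : kc ≠ 0)
    (hc : cc * f2 * rf = tf) :
    (-1)^n * kf / rf * (tf / (kc * kf)) / (f2 / (4^n * nf) * nf) * ((-1)^n * z^(2*n) / 4^n)
      = cc / kc * z^(2*n) := by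
  rw [← hc]
  have h4 : (4:ℂ)^n ≠ 0 := pow_ne_zero _ (by norm_num)
  field_simp
  have hm1 : ((-1:ℂ))^n * (-1)^n = 1 := by rw [← pow_add, ← two_mul, pow_mul]; norm_num
  linear_combination cc*z^(2*n) * hm1

lemma sum_split (m : ℕ) (f : ℕ → ℂ) :
    ∑ j ∈ Finset.range (2*m+1), f j =
      ∑ n ∈ Finset.range (m+1), f (2*n) + ∑ n ∈ Finset.range m, f (2*n+1) := by
  induction m with
  | zero => simp
  | succ m ih =>
    rw [Finset.sum_range_succ (f := fun n => f (2*n)) (n := m+1),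
      Finset.sum_range_succ (f := fun n => f (2*n+1)) (n := m),
      show 2*(m+1)+1 = (2*m+1) + 1 + 1 by ring, Finset.sum_range_succ, Finset.sum_range_succ, ih,
      show 2*m+1+1 = 2*(m+1) by ring]
    ring

theorem stmt_19 (k : ℕ) (hk : 1 ≤ k) (z : ℂ) :
    Vpos k z =
      hyp2F1 (-(k : ℂ)) ((k : ℂ) + 1) (1 / 2) (-z ^ 2 / 4) +
        (k : ℂ) * z * hyp2F1 (1 - (k : ℂ)) ((k : ℂ) + 1) (3 / 2) (-z ^ 2 / 4) := by
  have hkm1 : (1 - (k:ℂ)) = -(((k-1 : ℕ)) : ℂ) := by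
    push_cast [Nat.cast_sub hk]; ring
  have hA : hyp2F1 (-(k : ℂ)) ((k : ℂ) + 1) (1 / 2) (-z ^ 2 / 4) =
      ∑ n ∈ Finset.range (k+1), (((k+n).choose (2*n) : ℕ) : ℂ) * z ^ (2*n) := by
    rw [hyp2F1]
    rw [tsum_eq_sum (s := Finset.range (k+1))
      (f := fun n => ((ascPochhammer ℂ n).eval (-(k:ℂ)) * (ascPochhammer ℂ n).eval ((k:ℂ)+1)) /
        ((ascPochhammer ℂ n).eval (1/2) * (n.factorial : ℂ)) * (-z^2/4) ^ n)]
    · apply Finset.sum_congr rfl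
      intro n hn
      have hnk : n ≤ k := by simpa [Nat.lt_succ_iff] using Finset.mem_range.mp hn
      rw [aP_neg k n hnk, aP_nat_succ k n, aP_half n]
      have hc : (((k+n).choose (2*n) : ℕ) : ℂ) * ((2*n).factorial : ℂ) * (((k-n).factorial : ℂ)) =
          ((k+n).factorial : ℂ) := by
        have h2n : 2*n ≤ k+n := by omega
        have h := Nat.choose_mul_factorial_mul_factorial h2n
        have hsub : k + n - 2*n = k - n := by omega
        rw [hsub] at h
        exact_mod_cast h
      have hw : (-z^2/4)^n = (-1)^n * z^(2*n) / 4^n := by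
        rw [div_pow, neg_pow, ← pow_mul]
      rw [hw]
      exact key1 _ _ _ _ _ _ _ _ (fac_ne k) (fac_ne (k-n)) (fac_ne (2*n)) (fac_ne n) hc
    · intro n hn
      have hnk : k < n := by
        have := Finset.mem_range.not.mp hn; omega
      rw [aP_neg_zero k n hnk]
      simp
  have hB : hyp2F1 (1 - (k : ℂ)) ((k : ℂ) + 1) (3 / 2) (-z ^ 2 / 4) =
      ∑ n ∈ Finset.range k, ((((k+n).choose (2*n+1) : ℕ) : ℂ) / k) * z ^ (2*n) := by
    rw [hyp2F1, hkm1]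
    rw [tsum_eq_sum (s := Finset.range k)
      (f := fun n => ((ascPochhammer ℂ n).eval (-((k-1:ℕ):ℂ)) * (ascPochhammer ℂ n).eval ((k:ℂ)+1)) /
        ((ascPochhammer ℂ n).eval (3/2) * (n.factorial : ℂ)) * (-z^2/4) ^ n)]
    · apply Finset.sum_congr rfl
      intro n hn
      have hnk : n ≤ k - 1 := by
        have := Finset.mem_range.mp hn; omega
      rw [aP_neg (k-1) n hnk, aP_nat_succ k n, aP_3half n]
      have hc : (((k+n).choose (2*n+1) : ℕ) : ℂ) * ((2*n+1).factorial : ℂ) *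
          (((k-1-n).factorial : ℂ)) = ((k+n).factorial : ℂ) := by
        have h2n : 2*n+1 ≤ k+n := by omega
        have h := Nat.choose_mul_factorial_mul_factorial h2n
        have hsub : k + n - (2*n+1) = k - 1 - n := by omega
        rw [hsub] at h
        exact_mod_cast h
      have hkfac : (k.factorial : ℂ) = (k : ℂ) * ((k-1).factorial : ℂ) := by
        rw [show k.factorial = ((k-1)+1).factorial by rw [show (k-1)+1 = k by omega],
          Nat.factorial_succ]
        push_cast
        rw [show ((k-1 : ℕ):ℂ) + 1 = (k:ℂ) by push_cast [Nat.cast_sub hk]; ring]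
      have hw : (-z^2/4)^n = (-1)^n * z^(2*n) / 4^n := by
        rw [div_pow, neg_pow, ← pow_mul]
      have hk0 : (k : ℂ) ≠ 0 := Nat.cast_ne_zero.mpr (by omega)
      rw [hw, hkfac]
      exact key2 _ _ _ _ _ _ _ _ _ (fac_ne (k-1)) (fac_ne (k-1-n)) (fac_ne (2*n+1))
        (fac_ne n) hk0 hc
    · intro n hn
      have hnk : k - 1 < n := by
        have := Finset.mem_range.not.mp hn; omega
      rw [aP_neg_zero (k-1) n hnk]
      simp
  rw [hA, hB, Vpos, sum_split k (fun j => ((Nat.choose (k + j / 2) j : ℕ) : ℂ) * z ^ j)]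
  have hk0 : (k : ℂ) ≠ 0 := Nat.cast_ne_zero.mpr (by omega)
  congr 1
  · apply Finset.sum_congr rfl
    intro n _
    have h2 : (2*n)/2 = n := by omega
    rw [h2]
  · rw [Finset.mul_sum]
    apply Finset.sum_congr rfl
    intro n _
    have h2 : (2*n+1)/2 = n := by omega
    rw [h2]
    field_simp
    ring
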